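/- Let S_1 be a 5-dimensional (maximal) totally singular subspace of a non-singular 10-dimensional plus-type quadratic space (R,q) over F_2, and let d(𝒮) count, over vectors v in 𝒮 = Span{(a,0,0),(0,b,b) : a ∈ S_1, b ∈ R} ⊆ R^3, the quantity 8 for each v with exactly one non-zero coordinate which is singular non-zero, 1 for each v with exactly two non-zero coordinates both non-singular, and 0 otherwise. Then d(𝒮) = 744. -/

import Mathlib

open QuadraticMap Module Submodule

section
variable {R : Type*} [AddCommGroup R] [Module (ZMod 2) R]

def IsTotallySingular (Q : QuadraticForm (ZMod 2) R) (S : Submodule (ZMod 2) R) : Prop :=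
  ∀ x ∈ S, Q x = 0

def QuadNonsingular (Q : QuadraticForm (ZMod 2) R) : Prop :=
  ∀ a : R, (∀ b : R, polar Q a b = 0) → a = 0

def IsPlusType (Q : QuadraticForm (ZMod 2) R) (m : ℕ) : Prop :=
  (∃ S : Submodule (ZMod 2) R, IsTotallySingular Q S ∧ Module.finrank (ZMod 2) S = m) ∧
  ∀ S : Submodule (ZMod 2) R, IsTotallySingular Q S → Module.finrank (ZMod 2) S ≤ m

def orthComp (Q : QuadraticForm (ZMod 2) R) (A : Submodule (ZMod 2) R) :
    Submodule (ZMod 2) R where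
  carrier := {x | ∀ a ∈ A, polar Q x a = 0}
  add_mem' := fun hx hy a ha => by
    rw [polar_add_left, hx a ha, hy a ha, add_zero]
  zero_mem' := fun a ha => by simp [polar]
  smul_mem' := fun c x hx a ha => by
    rw [polar_smul_left, hx a ha, smul_zero]

def NonsingularOn (Q : QuadraticForm (ZMod 2) R) (A : Submodule (ZMod 2) R) : Prop :=
  ∀ x ∈ A, (∀ y ∈ A, polar Q x y = 0) → x = 0

end

section aux
variable {G : Type*} [AddCommGroup G] [Module (ZMod 2) G]

lemma add_self_zmod2 (a : G) : a + a = 0 := by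
  rw [show (a + a : G) = (2 : ZMod 2) • a from (two_smul _ a).symm,
    show (2 : ZMod 2) = 0 from rfl, zero_smul]

lemma half_card [Fintype G] [DecidableEq G] (φ : G → ZMod 2)
    (hadd : ∀ a b, φ (a + b) = φ a + φ b)
    (s0 : G) (hs0 : φ s0 = 1) (c : ZMod 2) :
    2 * (Finset.univ.filter fun s => φ s = c).card = Fintype.card G := by
  classical
  have hone : (1 : ZMod 2) + 1 = 0 := rfl
  have hbij : (Finset.univ.filter fun s => φ s = c).card
      = (Finset.univ.filter fun s => φ s = c + 1).card := by
    apply Finset.card_bij (fun s _ => s + s0)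
    · intro s hs
      simp only [Finset.mem_filter, Finset.mem_univ, true_and] at hs ⊢
      rw [hadd, hs, hs0]
    · intro a ha b hb h
      have := congrArg (· + s0) h
      simpa [add_assoc, add_self_zmod2] using this
    · intro t ht
      simp only [Finset.mem_filter, Finset.mem_univ, true_and] at ht
      refine ⟨t + s0, ?_, ?_⟩
      · simp only [Finset.mem_filter, Finset.mem_univ, true_and, hadd, ht, hs0]
        rw [add_assoc, hone, add_zero]
      · rw [add_assoc, add_self_zmod2, add_zero]
  have hsplit := Finset.card_filter_add_card_filter_not
    (s := (Finset.univ : Finset G)) (p := fun s => φ s = c)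
  have hneg : (Finset.univ.filter fun s => ¬ φ s = c)
      = (Finset.univ.filter fun s => φ s = c + 1) := by
    apply Finset.filter_congr
    intro s _
    exact (show ∀ a c : ZMod 2, ¬ a = c ↔ a = c + 1 by decide) (φ s) c
  rw [hneg] at hsplit
  rw [Finset.card_univ] at hsplit
  omega

/-- Membership in the span. -/
lemma mem_spanS (S1 : Submodule (ZMod 2) G) (v : Fin 3 → G) :
    v ∈ Submodule.span (ZMod 2)
      ({w | ∃ a ∈ S1, w = ![a, 0, 0]} ∪ {w | ∃ b : G, w = ![0, b, b]})
    ↔ v 0 ∈ S1 ∧ v 1 = v 2 := by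
  constructor
  · intro h
    induction h using Submodule.span_induction with
    | mem w hw =>
      rcases hw with ⟨a, ha, rfl⟩ | ⟨b, rfl⟩
      · exact ⟨by simpa using ha, by simp⟩
      · exact ⟨by simp, by simp⟩
    | zero => exact ⟨by simp, by simp⟩
    | add x y hx hy ihx ihy =>
      exact ⟨by simpa using add_mem ihx.1 ihy.1, by simp [ihx.2, ihy.2]⟩
    | smul c x hx ihx =>
      exact ⟨by simpa using Submodule.smul_mem _ c ihx.1, by simp [ihx.2]⟩
  · rintro ⟨h0, h12⟩
    have hv : v = ![v 0, 0, 0] + ![0, v 1, v 1] := by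
      funext j
      fin_cases j <;> simp [h12]
    rw [hv]
    exact add_mem
      (Submodule.subset_span (Or.inl ⟨v 0, h0, rfl⟩))
      (Submodule.subset_span (Or.inr ⟨v 1, rfl⟩))

end aux

theorem d_count_744 {R : Type*} [AddCommGroup R] [Module (ZMod 2) R]
    [FiniteDimensional (ZMod 2) R]
    (Q : QuadraticForm (ZMod 2) R) (hdim : Module.finrank (ZMod 2) R = 10)
    (hns : QuadNonsingular Q) (htype : IsPlusType Q 5)
    (S1 : Submodule (ZMod 2) R) (hS1 : IsTotallySingular Q S1)
    (hS1d : Module.finrank (ZMod 2) S1 = 5) :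
    8 * Nat.card {v : Fin 3 → R |
        v ∈ Submodule.span (ZMod 2)
          ({w | ∃ a ∈ S1, w = ![a, 0, 0]} ∪ {w | ∃ b : R, w = ![0, b, b]}) ∧
        ∃ i : Fin 3, v i ≠ 0 ∧ Q (v i) = 0 ∧ ∀ j : Fin 3, j ≠ i → v j = 0} +
    Nat.card {v : Fin 3 → R |
        v ∈ Submodule.span (ZMod 2)
          ({w | ∃ a ∈ S1, w = ![a, 0, 0]} ∪ {w | ∃ b : R, w = ![0, b, b]}) ∧
        ∃ i : Fin 3, v i = 0 ∧ ∀ j : Fin 3, j ≠ i → v j ≠ 0 ∧ Q (v j) = 1} = 744 := by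
  classical
  have hfin : Finite R := Module.finite_of_finite (ZMod 2)
  cases nonempty_fintype R
  -- the polar bilinear form
  set B : LinearMap.BilinForm (ZMod 2) R := polarBilin Q with hB
  have hBapp : ∀ x y : R, B x y = polar Q x y := fun x y => rfl
  have hBnd : B.Nondegenerate := by
    refine ⟨fun m hm => hns m (fun b => hm b), fun m hm => hns m (fun b => ?_)⟩
    rw [polar_comm]; exact hm b
  have hBrefl : B.IsRefl := by
    intro x y h
    rw [hBapp, polar_comm]
    exact h
  -- S1 is its own orthogonal complement
  have hle : S1 ≤ B.orthogonal S1 := by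
    intro a ha
    rw [LinearMap.BilinForm.mem_orthogonal_iff]
    intro s hs
    show B s a = 0
    rw [hBapp]
    have := hS1 _ (add_mem hs ha)
    rw [polar, this, hS1 s hs, hS1 a ha]
    simp
  have horth : B.orthogonal S1 = S1 := by
    apply (Submodule.eq_of_le_of_finrank_le hle ?_).symm
    rw [LinearMap.BilinForm.finrank_orthogonal hBnd, hdim, hS1d]
  -- cardinalities
  have hcardR : Fintype.card R = 1024 := by
    rw [card_eq_pow_finrank (K := ZMod 2), hdim, ZMod.card]
    norm_num
  have hcardS1 : Fintype.card S1 = 32 := by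
    rw [card_eq_pow_finrank (K := ZMod 2), hS1d, ZMod.card]
    norm_num
  -- the count of nonsingular vectors
  set nsing : Finset R := Finset.univ.filter fun y => Q y = 1 with hnsing
  have hQadd : ∀ x s : R, Q (x + s) = Q x + Q s + polar Q x s := by
    intro x s
    rw [polar]
    ring
  -- for x ∉ S1, exactly 16 elements s of S1 with Q (x + s) = 1
  have hfiber : ∀ x : R, x ∉ S1 →
      (Finset.univ.filter fun s : S1 => Q (x + ↑s) = 1).card = 16 := by
    intro x hx
    have hex : ∃ s0 : S1, polar Q x ↑s0 = 1 := by
      by_contra hcon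
      push_neg at hcon
      apply hx
      rw [← horth, LinearMap.BilinForm.mem_orthogonal_iff]
      intro s hs
      have := hcon ⟨s, hs⟩
      show B s x = 0
      rw [hBapp, polar_comm]
      revert this
      generalize polar Q x s = a
      revert a
      decide
    obtain ⟨s0, hs0⟩ := hex
    have key := half_card (G := S1) (fun s => polar Q x ↑s)
      (fun a b => by simp [polar_add_right]) s0 hs0 (1 - Q x)
    rw [hcardS1] at key
    have hcongr : (Finset.univ.filter fun s : S1 => Q (x + ↑s) = 1)
        = (Finset.univ.filter fun s : S1 => polar Q x ↑s = 1 - Q x) := by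
      apply Finset.filter_congr
      intro s _
      rw [hQadd, hS1 _ s.2, add_zero]
      constructor
      · intro h
        rw [← h]; ring
      · intro h
        rw [h]; ring
    rw [hcongr]
    omega
  -- for x ∈ S1, no element s of S1 with Q (x + s) = 1
  have hfiber0 : ∀ x : R, x ∈ S1 →
      (Finset.univ.filter fun s : S1 => Q (x + ↑s) = 1).card = 0 := by
    intro x hx
    rw [Finset.card_eq_zero, Finset.filter_eq_empty_iff]
    intro s _
    rw [hS1 _ (add_mem hx s.2)]
    decide
  -- double counting
  have hway1 : ∀ s : S1, (Finset.univ.filter fun x : R => Q (x + ↑s) = 1).card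
      = nsing.card := by
    intro s
    rw [hnsing]
    apply Finset.card_bij (fun (x : R) (_ : x ∈ Finset.univ.filter fun x : R => Q (x + (s : R)) = 1) => x + (s : R))
    · intro a ha
      simp only [Finset.mem_filter, Finset.mem_univ, true_and] at ha ⊢
      exact ha
    · intro a _ b _ h
      have := congrArg (· + (s : R)) h
      simpa [add_assoc, add_self_zmod2] using this
    · intro y hy
      simp only [Finset.mem_filter, Finset.mem_univ, true_and] at hy
      refine ⟨y + (s : R), ?_, ?_⟩
      · simp only [Finset.mem_filter, Finset.mem_univ, true_and]
        rw [add_assoc, add_self_zmod2, add_zero]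
        exact hy
      · rw [add_assoc, add_self_zmod2, add_zero]
  have hdouble : 32 * nsing.card = (1024 - 32) * 16 := by
    have h1 : ∑ s : S1, (Finset.univ.filter fun x : R => Q (x + ↑s) = 1).card
        = 32 * nsing.card := by
      rw [Finset.sum_congr rfl (fun s _ => hway1 s), Finset.sum_const, Finset.card_univ,
        hcardS1, smul_eq_mul]
    have h2 : ∑ x : R, (Finset.univ.filter fun s : S1 => Q (x + ↑s) = 1).card
        = (1024 - 32) * 16 := by
      have : ∀ x : R, (Finset.univ.filter fun s : S1 => Q (x + ↑s) = 1).card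
          = if x ∈ S1 then 0 else 16 := by
        intro x
        by_cases hx : x ∈ S1
        · rw [if_pos hx]; exact hfiber0 x hx
        · rw [if_neg hx]; exact hfiber x hx
      rw [Finset.sum_congr rfl (fun x _ => this x), Finset.sum_ite, Finset.sum_const,
        Finset.sum_const, smul_eq_mul, smul_eq_mul, mul_zero, zero_add]
      have hsp := Finset.card_filter_add_card_filter_not
        (s := (Finset.univ : Finset R)) (p := fun x => x ∈ S1)
      rw [Finset.card_univ, hcardR] at hsp
      have hin : (Finset.univ.filter fun x : R => x ∈ S1).card = 32 := by
        rw [← hcardS1, Fintype.card_subtype]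
      omega
    have heq : ∑ s : S1, (Finset.univ.filter fun x : R => Q (x + ↑s) = 1).card
        = ∑ x : R, (Finset.univ.filter fun s : S1 => Q (x + ↑s) = 1).card := by
      simp only [Finset.card_filter]
      rw [Finset.sum_comm]
    rw [← h1, heq, h2]
  have hnsingcard : nsing.card = 496 := by omega
  -- identify the two sets
  have hset1 : {v : Fin 3 → R |
        v ∈ Submodule.span (ZMod 2)
          ({w | ∃ a ∈ S1, w = ![a, 0, 0]} ∪ {w | ∃ b : R, w = ![0, b, b]}) ∧
        ∃ i : Fin 3, v i ≠ 0 ∧ Q (v i) = 0 ∧ ∀ j : Fin 3, j ≠ i → v j = 0}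
      = (fun a : R => ![a, 0, 0]) '' ((S1 : Set R) \ {0}) := by
    ext v
    simp only [Set.mem_setOf_eq, Set.mem_image, mem_spanS, Set.mem_diff,
      Set.mem_singleton_iff, SetLike.mem_coe]
    constructor
    · rintro ⟨⟨h0, h12⟩, i, hi, hQi, hj⟩
      have hb : v 1 = 0 := by
        by_contra hb
        rcases eq_or_ne i 1 with rfl | h1
        · exact hb (h12.trans (hj 2 (by decide)))
        · exact hb (hj 1 (Ne.symm h1))
      have h2 : v 2 = 0 := by rw [← h12]; exact hb
      have hi0 : i = 0 := by
        by_contra h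
        rcases (show ∀ i : Fin 3, i ≠ 0 → i = 1 ∨ i = 2 by decide) i h with rfl | rfl
        · exact hi hb
        · exact hi h2
      subst hi0
      refine ⟨v 0, ⟨h0, hi⟩, ?_⟩
      funext j
      fin_cases j <;> simp [hb, h2]
    · rintro ⟨a, ⟨ha, ha0⟩, rfl⟩
      refine ⟨⟨by simpa using ha, by simp⟩, 0, by simpa using ha0,
        by simpa using hS1 a ha, fun j hj => ?_⟩
      rcases (show ∀ j : Fin 3, j ≠ 0 → j = 1 ∨ j = 2 by decide) j hj with rfl | rfl <;> simp
  have hset2 : {v : Fin 3 → R |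
        v ∈ Submodule.span (ZMod 2)
          ({w | ∃ a ∈ S1, w = ![a, 0, 0]} ∪ {w | ∃ b : R, w = ![0, b, b]}) ∧
        ∃ i : Fin 3, v i = 0 ∧ ∀ j : Fin 3, j ≠ i → v j ≠ 0 ∧ Q (v j) = 1}
      = (fun b : R => ![0, b, b]) '' {b : R | Q b = 1} := by
    ext v
    simp only [Set.mem_setOf_eq, Set.mem_image, mem_spanS]
    constructor
    · rintro ⟨⟨h0, h12⟩, i, hi, hj⟩
      have h1ne : v 1 ≠ 0 := by
        rcases eq_or_ne i 1 with rfl | h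
        · rw [h12]; exact (hj 2 (by decide)).1
        · exact (hj 1 (Ne.symm h)).1
      have h2ne : v 2 ≠ 0 := by rw [← h12]; exact h1ne
      have hi0 : i = 0 := by
        by_contra h
        rcases (show ∀ i : Fin 3, i ≠ 0 → i = 1 ∨ i = 2 by decide) i h with rfl | rfl
        · exact h1ne hi
        · exact h2ne hi
      subst hi0
      refine ⟨v 1, (hj 1 (by decide)).2, ?_⟩
      funext j
      fin_cases j
      · simpa using hi.symm
      · simp
      · simpa using h12
    · rintro ⟨b, hb, rfl⟩
      have hb0 : b ≠ 0 := by
        intro h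
        rw [h, QuadraticMap.map_zero] at hb
        exact absurd hb (by decide)
      exact ⟨⟨by simpa using S1.zero_mem, by simp⟩, 0, by simp,
        fun j hj => by fin_cases j <;> simp_all⟩
  -- compute the cardinalities
  have hinj1 : Function.Injective (fun a : R => ![a, 0, 0]) := by
    intro a b h
    simpa using congrFun h 0
  have hinj2 : Function.Injective (fun b : R => ![0, b, b]) := by
    intro a b h
    simpa using congrFun h 1
  have hc1 : Nat.card ((fun a : R => ![a, 0, 0]) '' ((S1 : Set R) \ {0})) = 31 := by
    rw [Nat.card_image_of_injective hinj1, Nat.card_coe_set_eq,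
      Set.ncard_diff_singleton_of_mem S1.zero_mem]
    have : (S1 : Set R).ncard = 32 := by
      rw [← Nat.card_coe_set_eq, Nat.card_eq_fintype_card]
      exact hcardS1
    omega
  have hc2 : Nat.card ((fun b : R => ![0, b, b]) '' {b : R | Q b = 1}) = 496 := by
    rw [Nat.card_image_of_injective hinj2, Nat.card_eq_fintype_card,
      Fintype.card_subtype]
    exact hnsingcard
  rw [hset1, hset2, hc1, hc2]
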